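/- Let X be a compact metric space with a countable basis and f₁,…,f_k continuous self-maps of X generating a minimal IFS. Let ℙ be the Bernoulli measure on Σ = {1,…,k}^ℕ with strictly positive weights. Then for every x ∈ X, for ℙ-almost every ω ∈ Σ the fiberwise orbit { f^n_ω(x) : n ≥ 1 } is dense in X (the probabilistic chaos game property). -/

import Mathlib

open MeasureTheory
open scoped ENNReal

/-- Apply the maps of an IFS along a finite word: `f_{w_n} ∘ ⋯ ∘ f_{w_1}`. -/
def applyWord {X : Type*} {k : ℕ} (f : Fin k → X → X) (w : List (Fin k)) (x : X) : X :=
  w.foldl (fun y i => f i y) x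

/-- The fiberwise iterate `f^n_ω(x) = f_{ω_n} ∘ ⋯ ∘ f_{ω_1}(x)` (0-indexed `ω`). -/
def fIter {X : Type*} {k : ℕ} (f : Fin k → X → X) (ω : ℕ → Fin k) (x : X) : ℕ → X
  | 0 => x
  | n + 1 => f (ω n) (fIter f ω x n)

section Aux
variable {X : Type*} {k : ℕ} (f : Fin k → X → X)

lemma applyWord_concat (w : List (Fin k)) (a : Fin k) (x : X) :
    applyWord f (w.concat a) x = f a (applyWord f w x) := by
  simp [applyWord, List.concat_eq_append, List.foldl_append]

lemma continuous_applyWord [TopologicalSpace X] (hf : ∀ i, Continuous (f i))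
    (w : List (Fin k)) : Continuous (applyWord f w) := by
  induction w with
  | nil => exact continuous_id
  | cons a w ih =>
    have h : applyWord f (a :: w) = (applyWord f w) ∘ (f a) := rfl
    rw [h]; exact ih.comp (hf a)

lemma fIter_shift (ω : ℕ → Fin k) (x : X) (t l : ℕ) :
    fIter f ω x (t + l) = fIter f (fun j => ω (t + j)) (fIter f ω x t) l := by
  induction l with
  | zero => rfl
  | succ l ih => simp [fIter, ih]

lemma fIter_eq_applyWord (ω : ℕ → Fin k) (x : X) (n : ℕ) :
    fIter f ω x n = applyWord f (List.ofFn fun i : Fin n => ω i) x := by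
  induction n with
  | zero => rfl
  | succ n ih =>
    rw [List.ofFn_succ']
    simp only [fIter, ih, applyWord_concat]
    rfl

lemma fIter_congr (ω ω' : ℕ → Fin k) (x : X) (n : ℕ) (h : ∀ i < n, ω i = ω' i) :
    fIter f ω x n = fIter f ω' x n := by
  induction n with
  | zero => rfl
  | succ n ih =>
    simp only [fIter, h n (Nat.lt_succ_self n),
      ih (fun i hi => h i (hi.trans (Nat.lt_succ_self n)))]

lemma measurableSet_cyl {n : ℕ} (u : Fin n → Fin k) :
    MeasurableSet {ω : ℕ → Fin k | ∀ i : Fin n, ω i = u i} := by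
  have h : {ω : ℕ → Fin k | ∀ i : Fin n, ω i = u i}
      = ⋂ i : Fin n, (fun ω : ℕ → Fin k => ω (i : ℕ)) ⁻¹' {u i} := by
    ext ω; simp
  rw [h]
  exact MeasurableSet.iInter fun i => (measurable_pi_apply _) (measurableSet_singleton _)

lemma measure_cylSet (μ : Measure (ℕ → Fin k)) (pw : Fin k → ℝ≥0∞)
    (hcyl : ∀ (n : ℕ) (w : Fin n → Fin k),
      μ {ω | ∀ i : Fin n, ω i = w i} = ∏ i, pw (w i))
    (n : ℕ) (S : Finset (Fin n → Fin k)) :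
    μ {ω | (fun i : Fin n => ω i) ∈ S} = ∑ u ∈ S, ∏ i, pw (u i) := by
  have hU : {ω : ℕ → Fin k | (fun i : Fin n => ω i) ∈ S}
      = ⋃ u ∈ S, {ω | ∀ i : Fin n, ω i = u i} := by
    ext ω
    simp only [Set.mem_setOf_eq, Set.mem_iUnion]
    constructor
    · intro h; exact ⟨_, h, fun i => rfl⟩
    · rintro ⟨u, hu, h⟩
      have : (fun i : Fin n => ω i) = u := funext fun i => h i
      rwa [this]
  rw [hU, measure_biUnion_finset ?_ (fun u _ => measurableSet_cyl u)]
  · exact Finset.sum_congr rfl fun u _ => hcyl n u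
  · intro u _ v _ huv
    rw [Function.onFun, Set.disjoint_left]
    intro ω hωu hωv
    exact huv (funext fun i => (hωu i).symm.trans (hωv i))

end Aux

/-- Extend a finite word to an infinite one by a default letter. -/
def extFn {k n : ℕ} (i₀ : Fin k) (u : Fin n → Fin k) : ℕ → Fin k :=
  fun j => if h : j < n then u ⟨j, h⟩ else i₀

lemma chaos_key {X : Type*} [MetricSpace X] [CompactSpace X] {k : ℕ}
    (f : Fin k → X → X) (hf : ∀ i, Continuous (f i))
    (hmin : ∀ x : X, Dense {y | ∃ w : List (Fin k), w ≠ [] ∧ y = applyWord f w x})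
    (μ : Measure (ℕ → Fin k)) [IsProbabilityMeasure μ]
    (pw : Fin k → ℝ≥0∞) (hpos : ∀ i, 0 < pw i) (hsum : ∑ i, pw i = 1)
    (hcyl : ∀ (n : ℕ) (w : Fin n → Fin k),
      μ {ω | ∀ i : Fin n, ω i = w i} = ∏ i, pw (w i))
    (hk : 0 < k) (x : X) (B : Set X) (hBo : IsOpen B) (hBne : B.Nonempty) :
    ∀ᵐ ω ∂μ, ∃ n : ℕ, 1 ≤ n ∧ fIter f ω x n ∈ B := by
  classical
  set i₀ : Fin k := ⟨0, hk⟩ with hi₀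
  -- Step 1: uniform word bound via compactness
  have hW0 : ∀ z : X, ∃ w : List (Fin k), w ≠ [] ∧ applyWord f w z ∈ B := by
    intro z
    obtain ⟨y, hy, hyB⟩ := (hmin z).exists_mem_open hBo hBne
    obtain ⟨w, hw, rfl⟩ := hy
    exact ⟨w, hw, hyB⟩
  choose W0 hW0ne hW0B using hW0
  obtain ⟨t, ht⟩ := isCompact_univ.elim_finite_subcover
    (fun y : X => applyWord f (W0 y) ⁻¹' B)
    (fun y => (continuous_applyWord f hf (W0 y)).isOpen_preimage B hBo)
    (fun z _ => Set.mem_iUnion.2 ⟨z, hW0B z⟩)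
  set N : ℕ := max 1 (t.sup fun y => (W0 y).length) with hNdef
  have hWex : ∀ z : X, ∃ w : List (Fin k), w ≠ [] ∧ w.length ≤ N ∧ applyWord f w z ∈ B := by
    intro z
    have h := ht (Set.mem_univ z)
    rw [Set.mem_iUnion₂] at h
    obtain ⟨y, hy, hz⟩ := h
    exact ⟨W0 y, hW0ne y, le_trans (Finset.le_sup (f := fun y => (W0 y).length) hy) (by rw [hNdef]; exact le_max_right _ _), hz⟩
  choose W hWne hWlen hWB using hWex
  -- Step 2: weights
  set c : ℝ≥0∞ := ∏ i, pw i with hc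
  have hpw1 : ∀ i, pw i ≤ 1 := fun i =>
    hsum ▸ Finset.single_le_sum (fun j _ => zero_le) (Finset.mem_univ i)
  have hcpw : ∀ j, c ≤ pw j := by
    intro j
    calc c = pw j * ∏ i ∈ Finset.univ.erase j, pw i :=
          (Finset.mul_prod_erase _ _ (Finset.mem_univ j)).symm
      _ ≤ pw j * 1 :=
          mul_le_mul_right (Finset.prod_le_one (fun i _ => zero_le) (fun i _ => hpw1 i)) _
      _ = pw j := mul_one _
  have hc1 : c ≤ 1 := (hcpw i₀).trans (hpw1 _)
  set δ : ℝ≥0∞ := c ^ N with hδdef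
  have hδ0 : 0 < δ :=
    ENNReal.pow_pos (CanonicallyOrderedAdd.prod_pos.2 fun i _ => hpos i) N
  have hδ1 : δ ≤ 1 := pow_le_one' hc1 N
  have hwt : ∀ z : X, δ ≤ ∏ j : Fin (W z).length, pw ((W z).get j) := by
    intro z
    calc δ = c ^ N := rfl
      _ ≤ c ^ (W z).length := pow_le_pow_of_le_one zero_le hc1 (hWlen z)
      _ = ∏ _j : Fin (W z).length, c := by simp
      _ ≤ ∏ j, pw ((W z).get j) := Finset.prod_le_prod' fun j _ => hcpw _
  -- Step 3: events
  have hagree : ∀ (M : ℕ) (ω : ℕ → Fin k) (n : ℕ), n ≤ M →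
      fIter f ω x n = fIter f (extFn i₀ fun i : Fin M => ω i) x n := by
    intro M ω n hn
    apply fIter_congr
    intro i hi
    simp only [extFn, dif_pos (lt_of_lt_of_le hi hn)]
  set S : ∀ m : ℕ, Finset (Fin (m * N) → Fin k) := fun m =>
    Finset.univ.filter (fun u => ∀ n, 1 ≤ n → n ≤ m * N →
      fIter f (extFn i₀ u) x n ∉ B) with hSdef
  have hES : ∀ m, {ω : ℕ → Fin k | ∀ n, 1 ≤ n → n ≤ m * N → fIter f ω x n ∉ B}
      = {ω | (fun i : Fin (m * N) => ω i) ∈ S m} := by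
    intro m
    ext ω
    simp only [Set.mem_setOf_eq, hSdef, Finset.mem_filter, Finset.mem_univ, true_and]
    constructor
    · intro h n h1 h2; rw [← hagree (m * N) ω n h2]; exact h n h1 h2
    · intro h n h1 h2; rw [hagree (m * N) ω n h2]; exact h n h1 h2
  have hμE : ∀ m, μ {ω : ℕ → Fin k | ∀ n, 1 ≤ n → n ≤ m * N → fIter f ω x n ∉ B}
      = ∑ u ∈ S m, ∏ i, pw (u i) := by
    intro m
    rw [hES m]
    exact measure_cylSet μ pw hcyl _ _
  -- Step 4: inductive bound
  have hstep : ∀ m, μ {ω : ℕ → Fin k | ∀ n, 1 ≤ n → n ≤ (m + 1) * N → fIter f ω x n ∉ B}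
      ≤ μ {ω : ℕ → Fin k | ∀ n, 1 ≤ n → n ≤ m * N → fIter f ω x n ∉ B} * (1 - δ) := by
    intro m
    -- notation
    set z : (Fin (m * N) → Fin k) → X := fun u => fIter f (extFn i₀ u) x (m * N) with hz
    set L : (Fin (m * N) → Fin k) → ℕ := fun u => (W (z u)).length with hL
    set g : ∀ u : Fin (m * N) → Fin k, Fin (L u) → Fin k := fun u j => (W (z u)).get j with hg
    set D : (Fin (m * N) → Fin k) → Set (ℕ → Fin k) := fun u =>
      {ω | ∀ i : Fin (m * N + L u), ω i = Fin.append u (g u) i} with hD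
    set C : (Fin (m * N) → Fin k) → Set (ℕ → Fin k) := fun u =>
      {ω | ∀ i : Fin (m * N), ω i = u i} with hC
    have hLpos : ∀ u, 1 ≤ L u := fun u => List.length_pos_iff.2 (hWne (z u))
    have hLle : ∀ u, L u ≤ N := fun u => hWlen (z u)
    -- subset claim
    have hsub : {ω : ℕ → Fin k | ∀ n, 1 ≤ n → n ≤ (m + 1) * N → fIter f ω x n ∉ B}
        ⊆ ⋃ u ∈ S m, (C u \ D u) := by
      intro ω hω
      set u : Fin (m * N) → Fin k := fun i => ω i with hu
      have huS : u ∈ S m := by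
        have hωm : ω ∈ {ω : ℕ → Fin k | ∀ n, 1 ≤ n → n ≤ m * N → fIter f ω x n ∉ B} := by
          intro n h1 h2
          exact hω n h1 (h2.trans (Nat.mul_le_mul_right N (Nat.le_succ m)))
        rw [hES m] at hωm
        exact hωm
      refine Set.mem_biUnion huS ⟨fun i => rfl, ?_⟩
      -- ω ∉ D u
      intro hDm
      have hzω : fIter f ω x (m * N) = z u := hagree (m * N) ω (m * N) le_rfl
      have hcoord : ∀ j : Fin (L u), ω (m * N + (j : ℕ)) = g u j := by
        intro j
        have h := hDm (Fin.natAdd (m * N) j)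
        rwa [Fin.append_right] at h
      have hhit : fIter f ω x (m * N + L u) = applyWord f (W (z u)) (z u) := by
        rw [fIter_shift, hzω, fIter_eq_applyWord]
        congr 1
        have : (List.ofFn fun i : Fin (L u) => ω (m * N + (i : ℕ))) = W (z u) := by
          rw [show (fun i : Fin (L u) => ω (m * N + (i : ℕ))) = g u from funext hcoord]
          exact List.ofFn_get _
        exact this
      have h1n : 1 ≤ m * N + L u := le_add_of_nonneg_of_le (Nat.zero_le _) (hLpos u)
      have h2n : m * N + L u ≤ (m + 1) * N := by
        rw [Nat.succ_mul]
        exact Nat.add_le_add_left (hLle u) _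
      exact hω (m * N + L u) h1n h2n (hhit ▸ hWB (z u))
    -- measure bound
    calc μ {ω : ℕ → Fin k | ∀ n, 1 ≤ n → n ≤ (m + 1) * N → fIter f ω x n ∉ B}
        ≤ μ (⋃ u ∈ S m, (C u \ D u)) := measure_mono hsub
      _ ≤ ∑ u ∈ S m, μ (C u \ D u) := measure_biUnion_finset_le _ _
      _ ≤ ∑ u ∈ S m, (∏ i, pw (u i)) * (1 - δ) := by
          refine Finset.sum_le_sum fun u _ => ?_
          have hDC : D u ⊆ C u := by
            intro ω hω i
            have h := hω (Fin.castAdd (L u) i)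
            rwa [Fin.append_left] at h
          have hμD : μ (D u) = (∏ i, pw (u i)) * ∏ j, pw (g u j) := by
            rw [hD]
            rw [hcyl (m * N + L u) (Fin.append u (g u))]
            rw [Fin.prod_univ_add]
            congr 1
            · exact Finset.prod_congr rfl fun i _ => by rw [Fin.append_left]
            · exact Finset.prod_congr rfl fun j _ => by rw [Fin.append_right]
          have hμC : μ (C u) = ∏ i, pw (u i) := hcyl _ _
          rw [measure_diff hDC (measurableSet_cyl _).nullMeasurableSet (measure_ne_top μ _),
            hμD, hμC]
          have h1 : (∏ i, pw (u i)) * δ ≤ (∏ i, pw (u i)) * ∏ j, pw (g u j) :=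
            mul_le_mul_right (hwt (z u)) _
          refine le_trans (tsub_le_tsub_left h1 _) ?_
          rw [tsub_le_iff_right, ← mul_add, tsub_add_cancel_of_le hδ1, mul_one]
      _ = (∑ u ∈ S m, ∏ i, pw (u i)) * (1 - δ) := (Finset.sum_mul _ _ _).symm
      _ = μ {ω : ℕ → Fin k | ∀ n, 1 ≤ n → n ≤ m * N → fIter f ω x n ∉ B} * (1 - δ) := by
          rw [hμE m]
  have hEbound : ∀ m, μ {ω : ℕ → Fin k | ∀ n, 1 ≤ n → n ≤ m * N → fIter f ω x n ∉ B}
      ≤ (1 - δ) ^ m := by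
    intro m
    induction m with
    | zero => simpa using prob_le_one
    | succ m ih =>
      calc μ {ω : ℕ → Fin k | ∀ n, 1 ≤ n → n ≤ (m + 1) * N → fIter f ω x n ∉ B}
          ≤ μ {ω : ℕ → Fin k | ∀ n, 1 ≤ n → n ≤ m * N → fIter f ω x n ∉ B} * (1 - δ) :=
            hstep m
        _ ≤ (1 - δ) ^ m * (1 - δ) := mul_le_mul_left ih _
        _ = (1 - δ) ^ (m + 1) := (pow_succ _ _).symm
  -- Step 5: conclude
  rw [MeasureTheory.ae_iff]
  have hsub2 : ∀ m, {ω : ℕ → Fin k | ¬ ∃ n, 1 ≤ n ∧ fIter f ω x n ∈ B}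
      ⊆ {ω : ℕ → Fin k | ∀ n, 1 ≤ n → n ≤ m * N → fIter f ω x n ∉ B} := by
    intro m ω hω n h1 _ hB'
    exact hω ⟨n, h1, hB'⟩
  have h0 : μ {ω : ℕ → Fin k | ¬ ∃ n, 1 ≤ n ∧ fIter f ω x n ∈ B} ≤ 0 := by
    refine ge_of_tendsto' (ENNReal.tendsto_pow_atTop_nhds_zero_of_lt_one
      (ENNReal.sub_lt_self ENNReal.one_ne_top one_ne_zero hδ0.ne')) (fun m => ?_)
    exact le_trans (measure_mono (hsub2 m)) (hEbound m)
  exact le_antisymm h0 zero_le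


theorem stmt7 {X : Type*} [MetricSpace X] [CompactSpace X] {k : ℕ}
    (f : Fin k → X → X) (hf : ∀ i, Continuous (f i))
    (hmin : ∀ x : X, Dense {y | ∃ w : List (Fin k), w ≠ [] ∧ y = applyWord f w x})
    (μ : Measure (ℕ → Fin k)) [IsProbabilityMeasure μ]
    (pw : Fin k → ℝ≥0∞) (hpos : ∀ i, 0 < pw i) (hsum : ∑ i, pw i = 1)
    (hcyl : ∀ (n : ℕ) (w : Fin n → Fin k),
      μ {ω | ∀ i : Fin n, ω i = w i} = ∏ i, pw (w i)) :
    ∀ x : X, ∀ᵐ ω ∂μ, Dense {y | ∃ n : ℕ, 1 ≤ n ∧ fIter f ω x n = y} := by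
  intro x
  rcases Nat.eq_zero_or_pos k with hk | hk
  · subst hk
    simp at hsum
  have hae : ∀ᵐ ω ∂μ, ∀ B ∈ TopologicalSpace.countableBasis X,
      B.Nonempty → ∃ n : ℕ, 1 ≤ n ∧ fIter f ω x n ∈ B := by
    rw [MeasureTheory.ae_ball_iff (TopologicalSpace.countable_countableBasis X)]
    intro B hB
    by_cases hne : B.Nonempty
    · filter_upwards [chaos_key f hf hmin μ pw hpos hsum hcyl hk x B
        (TopologicalSpace.isOpen_of_mem_countableBasis hB) hne] with ω h _ using h
    · exact Filter.Eventually.of_forall fun ω h => absurd h hne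
  filter_upwards [hae] with ω hω
  rw [(TopologicalSpace.isBasis_countableBasis X).dense_iff]
  intro o ho hone
  obtain ⟨n, h1, hnB⟩ := hω o ho hone
  exact ⟨fIter f ω x n, hnB, n, h1, rfl⟩
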